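/- Let (X,d) be an ultrametric space. Then (X,d) is generated by some labeled star graph (i.e., X = V(S) and d = d_l for a star graph S with non-degenerate labeling l) if and only if there exists a point x₀ ∈ X such that d(x₀, x) ≤ d(y, x) holds for all x, y ∈ X with x₀ ≠ x ≠ y. -/

import Mathlib

def IsUltrametric {X : Type*} (d : X → X → NNReal) : Prop :=
  (∀ x y, d x y = d y x) ∧ (∀ x y, d x y = 0 ↔ x = y) ∧
    ∀ x y z, d x y ≤ max (d x z) (d z y)

/-- `c` is the center of the star graph `S`: `c` is adjacent to every other
vertex and there are no edges between non-center vertices. -/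
def IsStarCenter {V : Type*} (S : SimpleGraph V) (c : V) : Prop :=
  (∀ v, v ≠ c → S.Adj c v) ∧ ∀ u w, u ≠ c → w ≠ c → ¬S.Adj u w

/-- The ultrametric generated by a labeled star graph with center `c`. -/
def starDist {V : Type*} [DecidableEq V] (c : V) (l : V → NNReal) (u v : V) : NNReal :=
  if u = v then 0
  else if u = c then max (l c) (l v)
  else if v = c then max (l u) (l c)
  else max (l u) (max (l c) (l v))

theorem stmt1 {X : Type*} [DecidableEq X] (d : X → X → NNReal)
    (hd : IsUltrametric d) :
    (∃ (S : SimpleGraph X) (c : X) (l : X → NNReal),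
        IsStarCenter S c ∧ (∀ u v, S.Adj u v → 0 < max (l u) (l v)) ∧
          ∀ u v, d u v = starDist c l u v) ↔
      ∃ x₀ : X, ∀ x y : X, x₀ ≠ x → x ≠ y → d x₀ x ≤ d y x := by
  obtain ⟨hsymm, hzero, htri⟩ := hd
  constructor
  · rintro ⟨S, c, l, ⟨hadj, hnon⟩, hpos, heq⟩
    refine ⟨c, fun x y hcx hxy => ?_⟩
    rw [heq c x, heq y x, starDist, starDist, if_neg hcx, if_pos rfl,
      if_neg (Ne.symm hxy)]
    by_cases hyc : y = c
    · subst hyc; rw [if_pos rfl]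
    · rw [if_neg hyc, if_neg (fun h => hcx h.symm)]
      exact le_max_right _ _
  · rintro ⟨c, hc⟩
    refine ⟨⟨fun u v => (u = c ∧ v ≠ c) ∨ (v = c ∧ u ≠ c),
        ⟨fun u v h => h.symm⟩, ⟨?_⟩⟩, c, fun x => d c x, ⟨?_, ?_⟩, ?_, ?_⟩
    · rintro v (⟨h1, h2⟩ | ⟨h1, h2⟩) <;> exact h2 h1
    · exact fun v hv => Or.inl ⟨rfl, hv⟩
    · rintro u w hu hw (⟨h1, _⟩ | ⟨h1, _⟩)
      · exact hu h1
      · exact hw h1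
    · rintro u v (⟨h1, h2⟩ | ⟨h1, h2⟩)
      · exact lt_max_of_lt_right (pos_iff_ne_zero.mpr fun h => h2 ((hzero c v).mp h).symm)
      · exact lt_max_of_lt_left (pos_iff_ne_zero.mpr fun h => h2 ((hzero c u).mp h).symm)
    · intro u v
      have hcc : d c c = 0 := (hzero c c).mpr rfl
      unfold starDist
      dsimp only
      by_cases huv : u = v
      · subst huv; rw [if_pos rfl]; exact (hzero u u).mpr rfl
      · rw [if_neg huv]
        by_cases huc : u = c
        · rw [if_pos huc, huc, hcc]
          simp
        · rw [if_neg huc]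
          by_cases hvc : v = c
          · rw [if_pos hvc, hvc, hcc]
            simp [hsymm u c]
          · rw [if_neg hvc, hcc]
            simp only [zero_le, max_eq_right]
            refine le_antisymm ?_ (max_le ?_ ?_)
            · have := htri u v c
              rwa [hsymm u c] at this
            · have := hc u v (Ne.symm huc) huv
              rwa [hsymm v u] at this
            · exact hc v u (Ne.symm hvc) (Ne.symm huv)
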